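/- Let r ≥ 2 be an integer and let (S₁, S₂) be an Euler pair of order r, i.e., rS₁ ⊆ S₁ and S₂ = S₁ \ rS₁. Then for all non-negative integers n and j, |Õ_{j,r}(n)| = |D̃_{j,r}(n)|. -/

import Mathlib

open Finset

/-- `rS`: the set `{r·s : s ∈ S}` of `r`-fold multiples of elements of `S`. -/
def rSet (r : ℕ) (S : Set ℕ) : Set ℕ := (fun s => r * s) '' S

/-- `Õ_{j,r}(n)`: partitions of `n` with exactly `j` different parts from `rS₁` and all
other parts from `S₂`. -/
noncomputable def setOt (S1 S2 : Set ℕ) (j r n : ℕ) : Finset (Nat.Partition n) :=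
  letI := Classical.propDecidable
  Finset.univ.filter fun p =>
    (p.parts.toFinset.filter fun i => i ∈ rSet r S1).card = j ∧
      ∀ i ∈ p.parts.toFinset, i ∉ rSet r S1 → i ∈ S2

/-- `D̃_{j,r}(n)`: partitions of `n` with all parts in `S₁` and exactly `j` different parts
repeated at least `r` times (all other parts appearing at most `r - 1` times). -/
noncomputable def setDt (S1 : Set ℕ) (j r n : ℕ) : Finset (Nat.Partition n) :=
  letI := Classical.propDecidable
  Finset.univ.filter fun p =>
    (∀ i ∈ p.parts, i ∈ S1) ∧
      (p.parts.toFinset.filter fun i => r ≤ p.parts.count i).card = j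

/-- `Õ_{≤j,r}(n)`: partitions of `n` with at most `j` different parts from `rS₁` and all
other parts from `S₂`. -/
noncomputable def setOtLe (S1 S2 : Set ℕ) (j r n : ℕ) : Finset (Nat.Partition n) :=
  letI := Classical.propDecidable
  Finset.univ.filter fun p =>
    (p.parts.toFinset.filter fun i => i ∈ rSet r S1).card ≤ j ∧
      ∀ i ∈ p.parts.toFinset, i ∉ rSet r S1 → i ∈ S2

/-- `D̃_{≤j,r}(n)`: partitions of `n` with all parts in `S₁` and at most `j` different parts
repeated at least `r` times. -/
noncomputable def setDtLe (S1 : Set ℕ) (j r n : ℕ) : Finset (Nat.Partition n) :=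
  letI := Classical.propDecidable
  Finset.univ.filter fun p =>
    (∀ i ∈ p.parts, i ∈ S1) ∧
      (p.parts.toFinset.filter fun i => r ≤ p.parts.count i).card ≤ j

/-- The number of parts of a partition. -/
def numParts {n : ℕ} (p : Nat.Partition n) : ℕ := Multiset.card p.parts

/-- The number of different parts of a partition. -/
def numDistinctParts {n : ℕ} (p : Nat.Partition n) : ℕ := p.parts.toFinset.card

/-- `b̃_{j,r}(n)`: the difference between the number of parts in all partitions in
`Õ_{j,r}(n)` and the number of parts in all partitions in `D̃_{j,r}(n)`. -/
noncomputable def bDifft (S1 S2 : Set ℕ) (j r n : ℕ) : ℤ :=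
  (∑ p ∈ setOt S1 S2 j r n, (numParts p : ℤ)) - ∑ p ∈ setDt S1 j r n, (numParts p : ℤ)

/-- `b̃_{≤j,r}(n)`. -/
noncomputable def bDifftLe (S1 S2 : Set ℕ) (j r n : ℕ) : ℤ :=
  (∑ p ∈ setOtLe S1 S2 j r n, (numParts p : ℤ)) - ∑ p ∈ setDtLe S1 j r n, (numParts p : ℤ)

/-- `b̃'_{j,r}(n)`: the difference between the number of different parts in all partitions
in `D̃_{j,r}(n)` and the number of different parts in all partitions in `Õ_{j,r}(n)`. -/
noncomputable def bDifft' (S1 S2 : Set ℕ) (j r n : ℕ) : ℤ :=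
  (∑ p ∈ setDt S1 j r n, (numDistinctParts p : ℤ)) -
    ∑ p ∈ setOt S1 S2 j r n, (numDistinctParts p : ℤ)

/-- `b̃'_{≤j,r}(n)`. -/
noncomputable def bDifftLe' (S1 S2 : Set ℕ) (j r n : ℕ) : ℤ :=
  (∑ p ∈ setDtLe S1 j r n, (numDistinctParts p : ℤ)) -
    ∑ p ∈ setOtLe S1 S2 j r n, (numDistinctParts p : ℤ)

/-- `T̃_{j,r}(n)`: the number of different parts with multiplicity between `r + 1` and
`2r - 1` in all partitions in `D̃_{j,r}(n)`. -/
noncomputable def Tcountt (S1 : Set ℕ) (j r n : ℕ) : ℕ :=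
  ∑ p ∈ setDt S1 j r n,
    (p.parts.toFinset.filter fun i =>
      r + 1 ≤ p.parts.count i ∧ p.parts.count i ≤ 2 * r - 1).card

/-- `(S₁, S₂)` is an Euler pair of order `r` if `rS₁ ⊆ S₁` and `S₂ = S₁ \ rS₁`. -/
def IsEulerPair (r : ℕ) (S1 S2 : Set ℕ) : Prop :=
  rSet r S1 ⊆ S1 ∧ S2 = S1 \ rSet r S1

variable {r : ℕ}

lemma pow_aux (hr : 2 ≤ r) (K : ℕ) : (r - 1) * r ^ K + r ^ K = r ^ K * r := by
  obtain ⟨t, rfl⟩ := Nat.exists_eq_add_of_le hr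
  have h : 2 + t - 1 = 1 + t := by omega
  rw [h]; ring

lemma mod_pow_succ' (hr : 2 ≤ r) (c K : ℕ) :
    c % r ^ (K + 1) = c % r ^ K + (c / r ^ K % r) * r ^ K := by
  have hrp : 0 < r := by omega
  have hpK : 0 < r ^ K := (Nat.pow_pos hrp : 0 < r ^ K)
  have h1 : c = r ^ K * (c / r ^ K) + c % r ^ K := (Nat.div_add_mod c (r ^ K)).symm
  have h2 : c / r ^ K = r * (c / r ^ K / r) + c / r ^ K % r := (Nat.div_add_mod _ r).symm
  have hmlt : c % r ^ K < r ^ K := Nat.mod_lt c hpK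
  have h3 : c / r ^ K % r < r := Nat.mod_lt _ hrp
  have hle : (c / r ^ K % r) * r ^ K ≤ (r - 1) * r ^ K := Nat.mul_le_mul_right _ (by omega)
  have hps : r ^ (K + 1) = r ^ K * r := pow_succ r K
  have hlt : c % r ^ K + (c / r ^ K % r) * r ^ K < r ^ (K + 1) := by
    have := pow_aux hr K; omega
  have hc : c = (c % r ^ K + (c / r ^ K % r) * r ^ K) + (c / r ^ K / r) * r ^ (K + 1) := by
    rw [hps]; nlinarith [h1, h2]
  conv_lhs => rw [hc]
  rw [Nat.add_mul_mod_self_right, Nat.mod_eq_of_lt hlt]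

lemma digitsum_eq_mod (hr : 2 ≤ r) (c K : ℕ) :
    ∑ k ∈ Finset.range K, (c / r ^ k % r) * r ^ k = c % r ^ K := by
  induction K with
  | zero => simp [Nat.mod_one]
  | succ K ih => rw [Finset.sum_range_succ, ih, mod_pow_succ' hr]

lemma lt_pow_self' (hr : 2 ≤ r) (c : ℕ) : c < r ^ (c + 1) := by
  calc c < 2 ^ (c + 1) := by
        have h1 := (Nat.lt_two_pow_self : c < 2 ^ c)
        have h2 : (2:ℕ) ^ c ≤ 2 ^ (c+1) := Nat.pow_le_pow_right (by norm_num) (by omega)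
        omega
  _ ≤ r ^ (c + 1) := Nat.pow_le_pow_left hr _

lemma digitsum_eq (hr : 2 ≤ r) (c : ℕ) :
    ∑ k ∈ Finset.range (c + 1), (c / r ^ k % r) * r ^ k = c := by
  rw [digitsum_eq_mod hr, Nat.mod_eq_of_lt (lt_pow_self' hr c)]

lemma sum_lt_pow (hr : 2 ≤ r) (D : ℕ → ℕ) (hD : ∀ j, D j < r) (K : ℕ) :
    ∑ j ∈ Finset.range K, D j * r ^ j < r ^ K := by
  induction K with
  | zero => simp
  | succ K ih =>
    rw [Finset.sum_range_succ, pow_succ]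
    have h1 : D K * r ^ K ≤ (r - 1) * r ^ K := Nat.mul_le_mul_right _ (by have := hD K; omega)
    have h2 := pow_aux hr K
    omega

lemma range_digit (hr : 2 ≤ r) (D : ℕ → ℕ) (hD : ∀ j, D j < r) (K k : ℕ) :
    (∑ j ∈ Finset.range K, D j * r ^ j) / r ^ k % r = if k < K then D k else 0 := by
  have hrp : 0 < r := by omega
  induction K with
  | zero => simp
  | succ K ih =>
    rw [Finset.sum_range_succ]
    rcases lt_trichotomy k K with h | h | h
    · have hdvd : D K * r ^ K = D K * r ^ (K - k) * r ^ k := by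
        rw [mul_assoc, ← pow_add]; congr 2; omega
      rw [if_pos (by omega)]
      rw [hdvd, Nat.add_mul_div_right _ _ ((Nat.pow_pos hrp : 0 < r ^ k))]
      have h4 : D K * r ^ (K - k) = D K * r ^ (K - k - 1) * r := by
        rw [mul_assoc, ← pow_succ]; congr 2; omega
      rw [h4, Nat.add_mul_mod_self_right, ih, if_pos h]
    · subst h
      rw [if_pos (by omega)]
      have hs := sum_lt_pow hr D hD k
      rw [Nat.add_mul_div_right _ _ ((Nat.pow_pos hrp : 0 < r ^ k)),
        Nat.div_eq_of_lt hs, Nat.zero_add, Nat.mod_eq_of_lt (hD k)]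
    · rw [if_neg (by omega)]
      have hs := sum_lt_pow hr D hD (K + 1)
      rw [← Finset.sum_range_succ]
      have hle : r ^ (K + 1) ≤ r ^ k := Nat.pow_le_pow_right hrp (by omega)
      rw [Nat.div_eq_of_lt (by omega), Nat.zero_mod]

lemma finset_digit (hr : 2 ≤ r) (J : Finset ℕ) (d : ℕ → ℕ) (hd : ∀ j ∈ J, d j < r) (k : ℕ) :
    (∑ j ∈ J, d j * r ^ j) / r ^ k % r = if k ∈ J then d k else 0 := by
  classical
  set K := (J.sup id) + 1 with hK
  have hsub : J ⊆ Finset.range K := fun j hj =>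
    Finset.mem_range.mpr (by have := Finset.le_sup (f := id) hj; simp at this; omega)
  set D : ℕ → ℕ := fun j => if j ∈ J then d j else 0 with hD
  have hDlt : ∀ j, D j < r := by
    intro j; simp only [hD]; split
    · exact hd j ‹_›
    · omega
  have hsum : ∑ j ∈ J, d j * r ^ j = ∑ j ∈ Finset.range K, D j * r ^ j := by
    rw [← Finset.sum_subset hsub (fun j _ hj => by simp only [hD, if_neg hj, zero_mul])]
    exact Finset.sum_congr rfl fun j hj => by simp [hD, hj]
  rw [hsum, range_digit hr D hDlt]
  by_cases hk : k ∈ J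
  · rw [if_pos (Finset.mem_range.mp (hsub hk)), if_pos hk, hD]; simp [hk]
  · rw [if_neg hk]; split
    · simp [hD, hk]
    · rfl

lemma eq_of_digits (hr : 2 ≤ r) (a b : ℕ) (h : ∀ k, a / r ^ k % r = b / r ^ k % r) : a = b := by
  have ha := digitsum_eq hr (a + b)  -- not directly; use mod version
  set K := a + b + 1 with hK
  have h1 : a % r ^ K = a := Nat.mod_eq_of_lt (lt_of_le_of_lt (by omega) (lt_pow_self' hr (a+b)))
  have h2 : b % r ^ K = b := Nat.mod_eq_of_lt (lt_of_le_of_lt (by omega) (lt_pow_self' hr (a+b)))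
  rw [← h1, ← h2, ← digitsum_eq_mod hr a K, ← digitsum_eq_mod hr b K]
  exact Finset.sum_congr rfl fun k _ => by rw [h k]


section Decomp
variable {r : ℕ} {S1 S2 : Set ℕ}

lemma rpow_mem (hsub : rSet r S1 ⊆ S1) (k : ℕ) {s : ℕ} (hs : s ∈ S1) : r ^ k * s ∈ S1 := by
  induction k with
  | zero => simpa using hs
  | succ k ih =>
    have : r ^ (k + 1) * s = r * (r ^ k * s) := by ring
    rw [this]
    exact hsub ⟨r ^ k * s, ih, rfl⟩

lemma exists_decomp (hr : 2 ≤ r) (hpos : ∀ s ∈ S1, 0 < s) (hsub : rSet r S1 ⊆ S1)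
    (h2 : S2 = S1 \ rSet r S1) :
    ∀ m ∈ S1, ∃ p : ℕ × ℕ, p.2 ∈ S2 ∧ m = r ^ p.1 * p.2 := by
  intro m
  induction m using Nat.strong_induction_on with
  | _ m ih =>
    intro hm
    by_cases hmr : m ∈ rSet r S1
    · obtain ⟨m', hm', rfl⟩ := hmr
      have hm'pos := hpos m' hm'
      have hlt : m' < r * m' := by nlinarith
      obtain ⟨⟨k, s⟩, hs, heq⟩ := ih m' hlt hm'
      exact ⟨(k + 1, s), hs, by rw [heq]; ring⟩
    · exact ⟨(0, m), by rw [h2]; exact ⟨hm, hmr⟩, by simp⟩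

open scoped Classical in
lemma decomp_unique (hr : 2 ≤ r) (hpos : ∀ s ∈ S1, 0 < s) (hsub : rSet r S1 ⊆ S1)
    (h2 : S2 = S1 \ rSet r S1) {k k' s s' : ℕ} (hs : s ∈ S2) (hs' : s' ∈ S2)
    (heq : r ^ k * s = r ^ k' * s') : k = k' ∧ s = s' := by
  have hS2sub : S2 ⊆ S1 := by rw [h2]; exact Set.diff_subset
  have hspos : 0 < s := hpos s (hS2sub hs)
  have hs'pos : 0 < s' := hpos s' (hS2sub hs')
  have key : ∀ k k' s s', s ∈ S2 → s' ∈ S2 → 0 < s → 0 < s' → k < k' →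
      r ^ k * s = r ^ k' * s' → False := by
    intro k k' s s' hs hs' hsp hs'p hkk heq
    have hre : r ^ k' = r ^ k * (r * r ^ (k' - k - 1)) := by
      rw [← mul_assoc]
      rw [mul_comm (r^k) r, mul_assoc, ← pow_add, ← pow_succ']
      congr 1
      omega
    rw [hre, mul_assoc] at heq
    have hrk : 0 < r ^ k := (Nat.pow_pos (by omega) : 0 < r ^ k)
    have hcancel : s = r * r ^ (k' - k - 1) * s' := Nat.eq_of_mul_eq_mul_left hrk heq
    have : s ∈ rSet r S1 := ⟨r ^ (k' - k - 1) * s', rpow_mem hsub _ (hS2sub hs'), by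
      rw [hcancel]; ring⟩
    rw [h2] at hs
    exact hs.2 this
  have hkk : k = k' := by
    rcases lt_trichotomy k k' with h | h | h
    · exact absurd (key k k' s s' hs hs' hspos hs'pos h heq) (by simp)
    · exact h
    · exact absurd (key k' k s' s hs' hs hs'pos hspos h heq.symm) (by simp)
  subst hkk
  refine ⟨rfl, Nat.eq_of_mul_eq_mul_left ((Nat.pow_pos (by omega) : 0 < r ^ k)) heq⟩

open scoped Classical in
noncomputable def sOf (r : ℕ) (S2 : Set ℕ) (m : ℕ) : ℕ :=
  if h : ∃ p : ℕ × ℕ, p.2 ∈ S2 ∧ m = r ^ p.1 * p.2 then h.choose.2 else 0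

open scoped Classical in
noncomputable def kOf (r : ℕ) (S2 : Set ℕ) (m : ℕ) : ℕ :=
  if h : ∃ p : ℕ × ℕ, p.2 ∈ S2 ∧ m = r ^ p.1 * p.2 then h.choose.1 else 0

open scoped Classical in
lemma decomp_spec (hr : 2 ≤ r) (hpos : ∀ s ∈ S1, 0 < s) (hsub : rSet r S1 ⊆ S1)
    (h2 : S2 = S1 \ rSet r S1) {m : ℕ} (hm : m ∈ S1) :
    sOf r S2 m ∈ S2 ∧ m = r ^ (kOf r S2 m) * sOf r S2 m := by
  have h := exists_decomp hr hpos hsub h2 m hm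
  rw [sOf, kOf, dif_pos h, dif_pos h]
  exact h.choose_spec

open scoped Classical in
lemma decomp_uniq (hr : 2 ≤ r) (hpos : ∀ s ∈ S1, 0 < s) (hsub : rSet r S1 ⊆ S1)
    (h2 : S2 = S1 \ rSet r S1) {m k s : ℕ} (hs : s ∈ S2) (heq : m = r ^ k * s) :
    kOf r S2 m = k ∧ sOf r S2 m = s := by
  have hex : ∃ p : ℕ × ℕ, p.2 ∈ S2 ∧ m = r ^ p.1 * p.2 := ⟨(k, s), hs, heq⟩
  rw [sOf, kOf, dif_pos hex, dif_pos hex]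
  have hspec := hex.choose_spec
  have := decomp_unique hr hpos hsub h2 hspec.1 hs (by rw [← hspec.2, heq])
  exact this

end Decomp

lemma msum_sum (s : Finset ℕ) (f : ℕ → Multiset ℕ) : (∑ i ∈ s, f i).sum = ∑ i ∈ s, (f i).sum :=
  map_sum Multiset.sumAddMonoidHom f s
lemma msum_counts (M : Multiset ℕ) : M.sum = ∑ x ∈ M.toFinset, M.count x * x := by
  conv_lhs => rw [← Multiset.toFinset_sum_count_nsmul_eq M]
  rw [msum_sum]
  refine Finset.sum_congr rfl fun x _ => ?_
  rw [Multiset.nsmul_singleton, Multiset.sum_replicate, smul_eq_mul]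

section PhiPsi
variable {r : ℕ} {S1 S2 : Set ℕ}

open scoped Classical in
noncomputable def phiM (r : ℕ) (S2 : Set ℕ) (M : Multiset ℕ) : Multiset ℕ :=
  ∑ m ∈ M.toFinset, (Multiset.replicate (M.count m / r) (r * m)
    + Multiset.replicate ((M.count m % r) * r ^ kOf r S2 m) (sOf r S2 m))

open scoped Classical in
noncomputable def psiM (r : ℕ) (S1 : Set ℕ) (N : Multiset ℕ) : Multiset ℕ :=
  ∑ x ∈ N.toFinset, (if x ∈ rSet r S1 then Multiset.replicate (r * N.count x) (x / r)
    else ∑ k ∈ Finset.range (N.count x + 1),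
      Multiset.replicate (N.count x / r ^ k % r) (r ^ k * x))

variable (hr : 2 ≤ r) (hpos : ∀ s ∈ S1, 0 < s) (hsub : rSet r S1 ⊆ S1)
  (h2 : S2 = S1 \ rSet r S1)

section
include hr hpos hsub h2

lemma hS2S1 : S2 ⊆ S1 := by rw [h2]; exact Set.diff_subset

lemma hdisj {x : ℕ} (hx : x ∈ S2) (hx' : x ∈ rSet r S1) : False := by
  rw [h2] at hx; exact hx.2 hx'

lemma count_phi_mul {M : Multiset ℕ} (hM : ∀ m ∈ M, m ∈ S1) {x : ℕ} (hx : x ∈ S1) :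
    (phiM r S2 M).count (r * x) = M.count x / r := by
  rw [phiM, Multiset.count_sum']
  have key : ∀ m ∈ M.toFinset,
      Multiset.count (r * x) (Multiset.replicate (M.count m / r) (r * m)
        + Multiset.replicate ((M.count m % r) * r ^ kOf r S2 m) (sOf r S2 m))
      = if m = x then M.count m / r else 0 := by
    intro m hm
    have hmS1 : m ∈ S1 := hM m (Multiset.mem_toFinset.mp hm)
    have hsOf := (decomp_spec hr hpos hsub h2 hmS1).1
    rw [Multiset.count_add, Multiset.count_replicate, Multiset.count_replicate]
    have hne : ¬ (sOf r S2 m = r * x) := fun h =>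
      hdisj hr hpos hsub h2 hsOf (h ▸ ⟨x, hx, rfl⟩)
    rw [if_neg hne, add_zero]
    by_cases hmx : m = x
    · rw [if_pos (by rw [hmx]), if_pos hmx]
    · rw [if_neg (fun h => hmx (Nat.eq_of_mul_eq_mul_left (by omega) h)), if_neg hmx]
  rw [Finset.sum_congr rfl key, Finset.sum_ite_eq' M.toFinset x (fun m => M.count m / r)]
  by_cases hxm : x ∈ M.toFinset
  · rw [if_pos hxm]
  · rw [if_neg hxm, Multiset.count_eq_zero_of_notMem (fun h => hxm (Multiset.mem_toFinset.mpr h)),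
      Nat.zero_div]

lemma count_phi_digit {M : Multiset ℕ} (hM : ∀ m ∈ M, m ∈ S1) {s : ℕ} (hs : s ∈ S2) (k : ℕ) :
    (phiM r S2 M).count s / r ^ k % r = M.count (r ^ k * s) % r := by
  classical
  have hcount : (phiM r S2 M).count s
      = ∑ m ∈ M.toFinset.filter (fun m => sOf r S2 m = s),
          (M.count m % r) * r ^ (kOf r S2 m) := by
    rw [phiM, Multiset.count_sum', Finset.sum_filter]
    refine Finset.sum_congr rfl fun m hm => ?_
    have hmS1 : m ∈ S1 := hM m (Multiset.mem_toFinset.mp hm)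
    rw [Multiset.count_add, Multiset.count_replicate, Multiset.count_replicate]
    have hne : ¬ (r * m = s) := fun h => hdisj hr hpos hsub h2 hs (h ▸ ⟨m, hmS1, rfl⟩)
    rw [if_neg hne, zero_add]
  have hrw : ∀ m ∈ M.toFinset.filter (fun m => sOf r S2 m = s), m = r ^ (kOf r S2 m) * s := by
    intro m hm
    rw [Finset.mem_filter] at hm
    have hmS1 : m ∈ S1 := hM m (Multiset.mem_toFinset.mp hm.1)
    have := (decomp_spec hr hpos hsub h2 hmS1).2
    rw [hm.2] at this
    exact this
  have hinj : ∀ a ∈ M.toFinset.filter (fun m => sOf r S2 m = s),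
      ∀ b ∈ M.toFinset.filter (fun m => sOf r S2 m = s),
      kOf r S2 a = kOf r S2 b → a = b := by
    intro a ha b hb hab
    rw [hrw a ha, hrw b hb, hab]
  have him : ∑ m ∈ M.toFinset.filter (fun m => sOf r S2 m = s),
        (M.count m % r) * r ^ (kOf r S2 m)
      = ∑ k' ∈ (M.toFinset.filter (fun m => sOf r S2 m = s)).image (kOf r S2),
          (M.count (r ^ k' * s) % r) * r ^ k' := by
    rw [Finset.sum_image hinj]
    refine Finset.sum_congr rfl fun m hm => ?_
    rw [← hrw m hm]
  rw [hcount, him, finset_digit hr _ _ (fun j _ => Nat.mod_lt _ (by omega)) k]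
  by_cases hk : k ∈ (M.toFinset.filter (fun m => sOf r S2 m = s)).image (kOf r S2)
  · rw [if_pos hk]
  · rw [if_neg hk]
    by_cases hcnt : r ^ k * s ∈ M
    · exfalso
      apply hk
      refine Finset.mem_image.mpr ⟨r ^ k * s, ?_, ?_⟩
      · rw [Finset.mem_filter]
        exact ⟨Multiset.mem_toFinset.mpr hcnt,
          (decomp_uniq hr hpos hsub h2 hs rfl).2⟩
      · exact (decomp_uniq hr hpos hsub h2 hs rfl).1
    · rw [Multiset.count_eq_zero_of_notMem hcnt, Nat.zero_mod]

lemma phi_mem {M : Multiset ℕ} (hM : ∀ m ∈ M, m ∈ S1) :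
    ∀ y ∈ phiM r S2 M, y ∈ rSet r S1 ∨ y ∈ S2 := by
  intro y hy
  rw [phiM, Multiset.mem_sum] at hy
  obtain ⟨m, hm, hy⟩ := hy
  have hmS1 : m ∈ S1 := hM m (Multiset.mem_toFinset.mp hm)
  rw [Multiset.mem_add] at hy
  rcases hy with hy | hy
  · left
    rw [Multiset.eq_of_mem_replicate hy]
    exact ⟨m, hmS1, rfl⟩
  · right
    rw [Multiset.eq_of_mem_replicate hy]
    exact (decomp_spec hr hpos hsub h2 hmS1).1

lemma phi_sum {M : Multiset ℕ} (hM : ∀ m ∈ M, m ∈ S1) :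
    (phiM r S2 M).sum = M.sum := by
  rw [phiM, msum_sum, msum_counts M]
  refine Finset.sum_congr rfl fun m hm => ?_
  have hmS1 : m ∈ S1 := hM m (Multiset.mem_toFinset.mp hm)
  obtain ⟨hsOf, hEq⟩ := decomp_spec hr hpos hsub h2 hmS1
  rw [Multiset.sum_add, Multiset.sum_replicate, Multiset.sum_replicate, smul_eq_mul,
    smul_eq_mul]
  have h1 : M.count m / r * (r * m) = (r * (M.count m / r)) * m := by ring
  have h2' : M.count m % r * r ^ kOf r S2 m * sOf r S2 m = (M.count m % r) * m := by
    rw [mul_assoc, ← hEq]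
  rw [h1, h2']
  have := Nat.div_add_mod (M.count m) r
  nlinarith [this]

lemma psi_mem {N : Multiset ℕ} (hN : ∀ x ∈ N, x ∈ rSet r S1 ∨ x ∈ S2) :
    ∀ y ∈ psiM r S1 N, y ∈ S1 := by
  intro y hy
  rw [psiM, Multiset.mem_sum] at hy
  obtain ⟨x, hx, hy⟩ := hy
  have hxN : x ∈ N := Multiset.mem_toFinset.mp hx
  by_cases hxr : x ∈ rSet r S1
  · rw [if_pos hxr] at hy
    obtain ⟨u, huS1, hux⟩ := hxr
    rw [Multiset.eq_of_mem_replicate hy, ← hux, Nat.mul_div_cancel_left u (by omega)]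
    exact huS1
  · have hxS2 : x ∈ S2 := (hN x hxN).resolve_left hxr
    rw [if_neg hxr, Multiset.mem_sum] at hy
    obtain ⟨k, _, hy⟩ := hy
    rw [Multiset.eq_of_mem_replicate hy]
    exact rpow_mem hsub k (hS2S1 hr hpos hsub h2 hxS2)

lemma psi_sum {N : Multiset ℕ} (hN : ∀ x ∈ N, x ∈ rSet r S1 ∨ x ∈ S2) :
    (psiM r S1 N).sum = N.sum := by
  rw [psiM, msum_sum, msum_counts N]
  refine Finset.sum_congr rfl fun x hx => ?_
  have hxN : x ∈ N := Multiset.mem_toFinset.mp hx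
  by_cases hxr : x ∈ rSet r S1
  · rw [if_pos hxr, Multiset.sum_replicate, smul_eq_mul]
    obtain ⟨u, huS1, hux⟩ := hxr
    rw [← hux, Nat.mul_div_cancel_left u (by omega)]
    ring
  · rw [if_neg hxr, msum_sum]
    have : ∀ k ∈ Finset.range (N.count x + 1),
        (Multiset.replicate (N.count x / r ^ k % r) (r ^ k * x)).sum
        = (N.count x / r ^ k % r) * r ^ k * x := by
      intro k _
      rw [Multiset.sum_replicate, smul_eq_mul]; ring
    rw [Finset.sum_congr rfl this, ← Finset.sum_mul, digitsum_eq hr]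

lemma count_psi {N : Multiset ℕ} (hN : ∀ x ∈ N, x ∈ rSet r S1 ∨ x ∈ S2) {m : ℕ}
    (hm : m ∈ S1) :
    (psiM r S1 N).count m
      = r * N.count (r * m) + N.count (sOf r S2 m) / r ^ (kOf r S2 m) % r := by
  classical
  obtain ⟨hsOf, hmEq⟩ := decomp_spec hr hpos hsub h2 hm
  rw [psiM, Multiset.count_sum']
  have key : ∀ x ∈ N.toFinset,
      Multiset.count m (if x ∈ rSet r S1 then Multiset.replicate (r * N.count x) (x / r)
        else ∑ k ∈ Finset.range (N.count x + 1),
          Multiset.replicate (N.count x / r ^ k % r) (r ^ k * x))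
      = (if x = r * m then r * N.count x else 0)
        + (if x = sOf r S2 m then N.count x / r ^ (kOf r S2 m) % r else 0) := by
    intro x hx
    have hxN : x ∈ N := Multiset.mem_toFinset.mp hx
    by_cases hxr : x ∈ rSet r S1
    · rw [if_pos hxr]
      obtain ⟨u, huS1, hux⟩ := hxr
      have hux' : r * u = x := hux
      have hdiv : x / r = u := by rw [← hux']; exact Nat.mul_div_cancel_left u (by omega)
      have h2nd : ¬ (x = sOf r S2 m) := fun h =>
        hdisj hr hpos hsub h2 (h ▸ hsOf) ⟨u, huS1, hux⟩
      rw [Multiset.count_replicate, if_neg h2nd, add_zero]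
      by_cases hxm : x = r * m
      · have hum : x / r = m := by rw [hxm]; exact Nat.mul_div_cancel_left m (by omega)
        rw [if_pos hum, if_pos hxm]
      · have hneg : ¬ (x / r = m) := by
          intro h
          apply hxm
          have hum : u = m := by rw [← hdiv, h]
          rw [← hux', hum]
        rw [if_neg hneg, if_neg hxm]
    · have hxS2 : x ∈ S2 := (hN x hxN).resolve_left hxr
      have h1st : ¬ (x = r * m) := fun h => hxr (h ▸ ⟨m, hm, rfl⟩)
      rw [if_neg hxr, Multiset.count_sum', if_neg h1st, zero_add]
      by_cases hxs : x = sOf r S2 m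
      · rw [if_pos hxs]
        have hterm : ∀ k ∈ Finset.range (N.count x + 1),
            Multiset.count m (Multiset.replicate (N.count x / r ^ k % r) (r ^ k * x))
            = if k = kOf r S2 m then N.count x / r ^ k % r else 0 := by
          intro k _
          rw [Multiset.count_replicate]
          by_cases hk : k = kOf r S2 m
          · rw [if_pos (by rw [hk, hxs]; exact hmEq.symm), if_pos hk]
          · rw [if_neg (fun h => hk (decomp_uniq hr hpos hsub h2 hxS2 h.symm).1.symm),
              if_neg hk]
        rw [Finset.sum_congr rfl hterm,
          Finset.sum_ite_eq' (Finset.range (N.count x + 1)) (kOf r S2 m)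
            (fun k => N.count x / r ^ k % r)]
        by_cases hkin : kOf r S2 m ∈ Finset.range (N.count x + 1)
        · rw [if_pos hkin]
        · rw [if_neg hkin]
          have hk : N.count x < kOf r S2 m := by
            rw [Finset.mem_range] at hkin; omega
          have : N.count x < r ^ kOf r S2 m :=
            lt_of_lt_of_le (lt_of_le_of_lt (le_refl _)
              (lt_of_lt_of_le (lt_pow_self' hr (N.count x))
                (Nat.pow_le_pow_right (by omega) (by omega))))
              (le_refl _)
          rw [Nat.div_eq_of_lt this, Nat.zero_mod]
      · rw [if_neg hxs]
        refine Finset.sum_eq_zero fun k _ => ?_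
        rw [Multiset.count_replicate, if_neg ?_]
        intro h
        exact hxs (decomp_uniq hr hpos hsub h2 hxS2 h.symm).2.symm
  rw [Finset.sum_congr rfl key, Finset.sum_add_distrib,
    Finset.sum_ite_eq' N.toFinset (r * m) (fun x => r * N.count x),
    Finset.sum_ite_eq' N.toFinset (sOf r S2 m)
      (fun x => N.count x / r ^ (kOf r S2 m) % r)]
  congr 1
  · by_cases hmem : r * m ∈ N.toFinset
    · rw [if_pos hmem]
    · rw [if_neg hmem,
        Multiset.count_eq_zero_of_notMem (fun h => hmem (Multiset.mem_toFinset.mpr h)),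
        Nat.mul_zero]
  · by_cases hmem : sOf r S2 m ∈ N.toFinset
    · rw [if_pos hmem]
    · rw [if_neg hmem,
        Multiset.count_eq_zero_of_notMem (fun h => hmem (Multiset.mem_toFinset.mpr h)),
        Nat.zero_div, Nat.zero_mod]

end
end PhiPsi

section Stats
variable {r : ℕ} {S1 S2 : Set ℕ}
variable (hr : 2 ≤ r) (hpos : ∀ s ∈ S1, 0 < s) (hsub : rSet r S1 ⊆ S1)
  (h2 : S2 = S1 \ rSet r S1)

include hr hpos hsub h2

open scoped Classical in
lemma card_phi {M : Multiset ℕ} (hM : ∀ m ∈ M, m ∈ S1) :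
    ((phiM r S2 M).toFinset.filter (fun y => y ∈ rSet r S1)).card
      = (M.toFinset.filter (fun i => r ≤ M.count i)).card := by
  refine Finset.card_bij' (fun y _ => y / r) (fun m _ => r * m) ?_ ?_ ?_ ?_
  · intro y hy
    rw [Finset.mem_filter] at hy
    obtain ⟨hyt, u, huS1, huy⟩ := hy
    have huy' : r * u = y := huy
    have hcnt : 0 < (phiM r S2 M).count y := Multiset.count_pos.mpr (Multiset.mem_toFinset.mp hyt)
    rw [← huy', count_phi_mul hr hpos hsub h2 hM huS1] at hcnt
    have hge : r ≤ M.count u := by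
      by_contra hlt
      rw [Nat.div_eq_of_lt (by omega)] at hcnt
      omega
    have hdiv : y / r = u := by rw [← huy']; exact Nat.mul_div_cancel_left u (by omega)
    show y / r ∈ M.toFinset.filter (fun i => r ≤ M.count i)
    rw [hdiv, Finset.mem_filter]
    exact ⟨Multiset.mem_toFinset.mpr
      (Multiset.count_pos.mp (show 0 < M.count u by omega)), hge⟩
  · intro m hm
    rw [Finset.mem_filter] at hm
    obtain ⟨hmt, hge⟩ := hm
    have hmS1 : m ∈ S1 := hM m (Multiset.mem_toFinset.mp hmt)
    rw [Finset.mem_filter]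
    constructor
    · rw [Multiset.mem_toFinset, ← Multiset.count_pos,
        count_phi_mul hr hpos hsub h2 hM hmS1]
      exact Nat.div_pos hge (by omega)
    · exact ⟨m, hmS1, rfl⟩
  · intro y hy
    rw [Finset.mem_filter] at hy
    obtain ⟨_, u, _, huy⟩ := hy
    have huy' : r * u = y := huy
    have hdiv : y / r = u := by rw [← huy']; exact Nat.mul_div_cancel_left u (by omega)
    show r * (y / r) = y
    rw [hdiv, huy']
  · intro m _
    show r * m / r = m
    exact Nat.mul_div_cancel_left m (by omega)

open scoped Classical in
lemma card_psi {N : Multiset ℕ} (hN : ∀ x ∈ N, x ∈ rSet r S1 ∨ x ∈ S2) :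
    ((psiM r S1 N).toFinset.filter (fun i => r ≤ (psiM r S1 N).count i)).card
      = (N.toFinset.filter (fun y => y ∈ rSet r S1)).card := by
  refine Finset.card_bij' (fun m _ => r * m) (fun y _ => y / r) ?_ ?_ ?_ ?_
  · intro m hm
    rw [Finset.mem_filter] at hm
    obtain ⟨hmt, hge⟩ := hm
    have hmS1 : m ∈ S1 :=
      psi_mem hr hpos hsub h2 hN m (Multiset.mem_toFinset.mp hmt)
    rw [count_psi hr hpos hsub h2 hN hmS1] at hge
    have hd : N.count (sOf r S2 m) / r ^ kOf r S2 m % r < r := Nat.mod_lt _ (by omega)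
    have h1 : 1 ≤ N.count (r * m) := by
      by_contra hc
      have : N.count (r * m) = 0 := by omega
      rw [this] at hge
      omega
    rw [Finset.mem_filter]
    exact ⟨Multiset.mem_toFinset.mpr
      (Multiset.count_pos.mp (show 0 < N.count (r * m) by omega)), ⟨m, hmS1, rfl⟩⟩
  · intro y hy
    rw [Finset.mem_filter] at hy
    obtain ⟨hyt, u, huS1, huy⟩ := hy
    have huy' : r * u = y := huy
    have hcnt : 1 ≤ N.count y := Multiset.count_pos.mpr (Multiset.mem_toFinset.mp hyt)
    have hcu : r ≤ (psiM r S1 N).count u := by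
      rw [count_psi hr hpos hsub h2 hN huS1, huy']
      calc r = r * 1 := by ring
      _ ≤ r * N.count y := Nat.mul_le_mul_left r hcnt
      _ ≤ _ := Nat.le_add_right _ _
    have hdiv : y / r = u := by rw [← huy']; exact Nat.mul_div_cancel_left u (by omega)
    show y / r ∈ (psiM r S1 N).toFinset.filter (fun i => r ≤ (psiM r S1 N).count i)
    rw [hdiv, Finset.mem_filter]
    exact ⟨Multiset.mem_toFinset.mpr
      (Multiset.count_pos.mp (show 0 < (psiM r S1 N).count u by omega)), hcu⟩
  · intro m _
    show r * m / r = m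
    exact Nat.mul_div_cancel_left m (by omega)
  · intro y hy
    rw [Finset.mem_filter] at hy
    obtain ⟨_, u, _, huy⟩ := hy
    have huy' : r * u = y := huy
    have hdiv : y / r = u := by rw [← huy']; exact Nat.mul_div_cancel_left u (by omega)
    show r * (y / r) = y
    rw [hdiv, huy']

lemma psi_phi {M : Multiset ℕ} (hM : ∀ m ∈ M, m ∈ S1) :
    psiM r S1 (phiM r S2 M) = M := by
  ext m
  by_cases hm : m ∈ S1
  · obtain ⟨hsOf, hmEq⟩ := decomp_spec hr hpos hsub h2 hm
    rw [count_psi hr hpos hsub h2 (phi_mem hr hpos hsub h2 hM) hm,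
      count_phi_mul hr hpos hsub h2 hM hm,
      count_phi_digit hr hpos hsub h2 hM hsOf (kOf r S2 m), ← hmEq]
    have := Nat.div_add_mod (M.count m) r
    omega
  · rw [Multiset.count_eq_zero.mpr (fun h => hm (hM m h)),
      Multiset.count_eq_zero.mpr
        (fun h => hm (psi_mem hr hpos hsub h2 (phi_mem hr hpos hsub h2 hM) m h))]

lemma phi_psi {N : Multiset ℕ} (hN : ∀ x ∈ N, x ∈ rSet r S1 ∨ x ∈ S2) :
    phiM r S2 (psiM r S1 N) = N := by
  ext x
  by_cases hxr : x ∈ rSet r S1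
  · obtain ⟨u, huS1, hux⟩ := hxr
    have hux' : r * u = x := hux
    rw [← hux', count_phi_mul hr hpos hsub h2 (psi_mem hr hpos hsub h2 hN) huS1,
      count_psi hr hpos hsub h2 hN huS1, hux']
    have hd : N.count (sOf r S2 u) / r ^ kOf r S2 u % r < r := Nat.mod_lt _ (by omega)
    rw [Nat.mul_add_div (by omega), Nat.div_eq_of_lt hd, add_zero]
  · by_cases hxs : x ∈ S2
    · apply eq_of_digits hr
      intro k
      rw [count_phi_digit hr hpos hsub h2 (psi_mem hr hpos hsub h2 hN) hxs k,
        count_psi hr hpos hsub h2 hN (rpow_mem hsub k (hS2S1 hr hpos hsub h2 hxs))]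
      have huniq := decomp_uniq hr hpos hsub h2 hxs (rfl : r ^ k * x = r ^ k * x)
      rw [huniq.1, huniq.2, Nat.mul_add_mod,
        Nat.mod_mod_of_dvd (N.count x / r ^ k) (dvd_refl r)]
    · rw [Multiset.count_eq_zero.mpr
          (fun h => (phi_mem hr hpos hsub h2 (psi_mem hr hpos hsub h2 hN) x h).elim hxr hxs),
        Multiset.count_eq_zero.mpr (fun h => (hN x h).elim hxr hxs)]

end Stats

section Final
variable {r : ℕ} {S1 S2 : Set ℕ}

open scoped Classical in
noncomputable def psiP (r : ℕ) (S1 S2 : Set ℕ) (hr : 2 ≤ r) (hpos : ∀ s ∈ S1, 0 < s)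
    (hsub : rSet r S1 ⊆ S1) (h2 : S2 = S1 \ rSet r S1) {n : ℕ} (q : Nat.Partition n) :
    Nat.Partition n :=
  if h : ∀ x ∈ q.parts, x ∈ rSet r S1 ∨ x ∈ S2 then
    { parts := psiM r S1 q.parts
      parts_pos := fun hi => hpos _ (psi_mem hr hpos hsub h2 h _ hi)
      parts_sum := by rw [psi_sum hr hpos hsub h2 h]; exact q.parts_sum }
  else q

open scoped Classical in
noncomputable def phiP (r : ℕ) (S1 S2 : Set ℕ) (hr : 2 ≤ r) (hpos : ∀ s ∈ S1, 0 < s)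
    (hS2pos : ∀ s ∈ S2, 0 < s) (hsub : rSet r S1 ⊆ S1) (h2 : S2 = S1 \ rSet r S1) {n : ℕ}
    (p : Nat.Partition n) : Nat.Partition n :=
  if h : ∀ x ∈ p.parts, x ∈ S1 then
    { parts := phiM r S2 p.parts
      parts_pos := by
        intro i hi
        rcases phi_mem hr hpos hsub h2 h i hi with hmem | hmem
        · obtain ⟨u, hu, huy⟩ := hmem
          have huy' : r * u = i := huy
          rw [← huy']
          exact Nat.mul_pos (by omega) (hpos u hu)
        · exact hS2pos _ hmem
      parts_sum := by rw [phi_sum hr hpos hsub h2 h]; exact p.parts_sum }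
  else p

lemma psiP_parts (hr : 2 ≤ r) (hpos : ∀ s ∈ S1, 0 < s) (hsub : rSet r S1 ⊆ S1)
    (h2 : S2 = S1 \ rSet r S1) {n : ℕ} {q : Nat.Partition n}
    (h : ∀ x ∈ q.parts, x ∈ rSet r S1 ∨ x ∈ S2) :
    (psiP r S1 S2 hr hpos hsub h2 q).parts = psiM r S1 q.parts := by
  rw [psiP, dif_pos h]

open scoped Classical in
lemma card_psi_general (hr : 2 ≤ r) (hpos : ∀ s ∈ S1, 0 < s) (hsub : rSet r S1 ⊆ S1)
    (h2 : S2 = S1 \ rSet r S1) {N : Multiset ℕ} (hN : ∀ x ∈ N, x ∈ rSet r S1 ∨ x ∈ S2)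
    (inst : DecidableEq ℕ)
    (ip : DecidablePred fun i => r ≤ @Multiset.count ℕ inst i (psiM r S1 N))
    (iq : DecidablePred fun y => y ∈ rSet r S1) :
    (@Finset.filter _ _ ip (@Multiset.toFinset _ inst (psiM r S1 N))).card
      = (@Finset.filter _ _ iq (@Multiset.toFinset _ inst N)).card := by
  obtain rfl : inst = instDecidableEqNat := Subsingleton.elim _ _
  have h := card_psi hr hpos hsub h2 hN
  convert h using 3 <;> exact Subsingleton.elim _ _

open scoped Classical in
lemma card_phi_general (hr : 2 ≤ r) (hpos : ∀ s ∈ S1, 0 < s) (hsub : rSet r S1 ⊆ S1)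
    (h2 : S2 = S1 \ rSet r S1) {M : Multiset ℕ} (hM : ∀ m ∈ M, m ∈ S1)
    (inst : DecidableEq ℕ)
    (ip : DecidablePred fun y => y ∈ rSet r S1)
    (iq : DecidablePred fun i => r ≤ @Multiset.count ℕ inst i M) :
    (@Finset.filter _ _ ip (@Multiset.toFinset _ inst (phiM r S2 M))).card
      = (@Finset.filter _ _ iq (@Multiset.toFinset _ inst M)).card := by
  obtain rfl : inst = instDecidableEqNat := Subsingleton.elim _ _
  have h := card_phi hr hpos hsub h2 hM
  convert h using 3 <;> exact Subsingleton.elim _ _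

lemma phiP_parts (hr : 2 ≤ r) (hpos : ∀ s ∈ S1, 0 < s) (hS2pos : ∀ s ∈ S2, 0 < s)
    (hsub : rSet r S1 ⊆ S1) (h2 : S2 = S1 \ rSet r S1) {n : ℕ} {p : Nat.Partition n}
    (h : ∀ x ∈ p.parts, x ∈ S1) :
    (phiP r S1 S2 hr hpos hS2pos hsub h2 p).parts = phiM r S2 p.parts := by
  rw [phiP, dif_pos h]

end Final

/-- For an Euler pair `(S₁, S₂)` of order `r`, `|Õ_{j,r}(n)| = |D̃_{j,r}(n)|`. -/
theorem euler_pair_franklin (r : ℕ) (hr : 2 ≤ r) (S1 S2 : Set ℕ)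
    (hS1 : ∀ s ∈ S1, 0 < s) (hS2 : ∀ s ∈ S2, 0 < s)
    (hpair : IsEulerPair r S1 S2) (n j : ℕ) :
    (setOt S1 S2 j r n).card = (setDt S1 j r n).card := by
  classical
  obtain ⟨hsub, h2⟩ := hpair
  have hOmem : ∀ q : Nat.Partition n, q ∈ setOt S1 S2 j r n →
      (∀ x ∈ q.parts, x ∈ rSet r S1 ∨ x ∈ S2) := by
    intro q hq x hx
    simp only [setOt, Finset.mem_filter, Finset.mem_univ, true_and,
      Multiset.mem_toFinset] at hq
    by_cases h : x ∈ rSet r S1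
    · exact Or.inl h
    · exact Or.inr (hq.2 x hx h)
  have hDmem : ∀ p : Nat.Partition n, p ∈ setDt S1 j r n → (∀ x ∈ p.parts, x ∈ S1) := by
    intro p hp
    simp only [setDt, Finset.mem_filter, Finset.mem_univ, true_and] at hp
    exact hp.1
  refine Finset.card_bij' (fun q _ => psiP r S1 S2 hr hS1 hsub h2 q)
    (fun p _ => phiP r S1 S2 hr hS1 hS2 hsub h2 p) ?_ ?_ ?_ ?_
  · intro q hq
    have hN := hOmem q hq
    simp only [setOt, Finset.mem_filter, Finset.mem_univ, true_and] at hq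
    simp only [setDt, Finset.mem_filter, Finset.mem_univ, true_and]
    rw [psiP_parts hr hS1 hsub h2 hN]
    refine ⟨fun i hi => psi_mem hr hS1 hsub h2 hN i hi, ?_⟩
    exact (card_psi_general hr hS1 hsub h2 hN _ _ _).trans hq.1
  · intro p hp
    have hM := hDmem p hp
    simp only [setDt, Finset.mem_filter, Finset.mem_univ, true_and] at hp
    simp only [setOt, Finset.mem_filter, Finset.mem_univ, true_and]
    rw [phiP_parts hr hS1 hS2 hsub h2 hM]
    constructor
    · exact (card_phi_general hr hS1 hsub h2 hM _ _ _).trans hp.2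
    · intro i hi hnot
      simp only [Multiset.mem_toFinset] at hi
      exact ((phi_mem hr hS1 hsub h2 hM i hi).resolve_left hnot)
  · intro q hq
    have hN := hOmem q hq
    have hM' : ∀ x ∈ (psiP r S1 S2 hr hS1 hsub h2 q).parts, x ∈ S1 := by
      rw [psiP_parts hr hS1 hsub h2 hN]
      exact fun x hx => psi_mem hr hS1 hsub h2 hN x hx
    apply Nat.Partition.ext
    rw [phiP_parts hr hS1 hS2 hsub h2 hM', psiP_parts hr hS1 hsub h2 hN,
      phi_psi hr hS1 hsub h2 hN]
  · intro p hp
    have hM := hDmem p hp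
    have hN' : ∀ x ∈ (phiP r S1 S2 hr hS1 hS2 hsub h2 p).parts,
        x ∈ rSet r S1 ∨ x ∈ S2 := by
      rw [phiP_parts hr hS1 hS2 hsub h2 hM]
      exact fun x hx => phi_mem hr hS1 hsub h2 hM x hx
    apply Nat.Partition.ext
    rw [psiP_parts hr hS1 hsub h2 hN', phiP_parts hr hS1 hS2 hsub h2 hM,
      psi_phi hr hS1 hsub h2 hM]
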